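/- Let A ∈ ℝ^{N×r} with rank(A) = r and orthonormal column-space basis U_A, let B ∈ ℝ^{N×n}, let B^⊥ = B − U_A U_Aᵀ B, and let R² = ‖B^⊥‖_F². Let p ∈ [0,1]^N be a probability distribution such that for some β ∈ (0,1], pᵢ ≥ β ℓᵢ(A)/r for all i ∈ [N], where ℓᵢ(A) = ‖U_A(i,:)‖₂², and let S ∈ ℝ^{s×N} ~ RandSample(s, p). Then for any ε > 0 and δ ∈ (0,1), if s ≥ 2r/(β δ ε), the condition ‖U_Aᵀ Sᵀ S B^⊥‖_F² ≤ ε R²/2 holds with probability at least 1 − δ. -/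

import Mathlib

open Matrix MeasureTheory

/-- Squared Frobenius norm of a real matrix. -/
noncomputable def frobSq {m n : Type*} [Fintype m] [Fintype n] (M : Matrix m n ℝ) : ℝ :=
  ∑ i, ∑ j, (M i j) ^ 2

/-- Square of the smallest singular value of a matrix, as the infimum of
squared norms `‖M x‖₂²` over unit vectors `x`. -/
noncomputable def sigmaMinSq {m n : Type*} [Fintype m] [Fintype n] (M : Matrix m n ℝ) : ℝ :=
  sInf {c : ℝ | ∃ x : n → ℝ, ∑ i, (x i) ^ 2 = 1 ∧ c = ∑ j, (M.mulVec x j) ^ 2}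

/-- Square of the largest singular value of a matrix. -/
noncomputable def sigmaMaxSq {m n : Type*} [Fintype m] [Fintype n] (M : Matrix m n ℝ) : ℝ :=
  sSup {c : ℝ | ∃ x : n → ℝ, ∑ i, (x i) ^ 2 = 1 ∧ c = ∑ j, (M.mulVec x j) ^ 2}

/-- The weighted row-sampling ("RandSample") matrix determined by the sampled
indices `ξ : Fin s → Fin N` and the sampling probabilities `p`:
`S j i = 1/√(s pᵢ)` if `ξ j = i` and `0` otherwise. -/
noncomputable def randSampleMatrix {N : ℕ} (s : ℕ) (p : Fin N → ℝ) (ξ : Fin s → Fin N) :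
    Matrix (Fin s) (Fin N) ℝ :=
  fun j i => if ξ j = i then 1 / Real.sqrt (s * p i) else 0

/-- The measure on `Fin N` in which index `i` has probability `p i`. -/
noncomputable def sampleMeasure {N : ℕ} (p : Fin N → ℝ) : Measure (Fin N) :=
  ∑ i, ENNReal.ofReal (p i) • Measure.dirac i

/-- The law of `s` i.i.d. indices, each drawn from the distribution `p` on `Fin N`. -/
noncomputable def sampleMeasurePi {N : ℕ} (s : ℕ) (p : Fin N → ℝ) :
    Measure (Fin s → Fin N) :=
  Measure.pi fun _ => sampleMeasure p


lemma sampleMeasure_apply {N : ℕ} (p : Fin N → ℝ) (E : Set (Fin N)) :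
    sampleMeasure p E = ∑ i, ENNReal.ofReal (p i) * Measure.dirac i E := by
  simp [sampleMeasure]

lemma sampleMeasure_singleton {N : ℕ} (p : Fin N → ℝ) (i : Fin N) :
    sampleMeasure p {i} = ENNReal.ofReal (p i) := by
  rw [sampleMeasure_apply]
  rw [Finset.sum_eq_single i]
  · simp
  · intro b _ hb
    simp [Measure.dirac_apply, Set.indicator, hb]
  · simp

instance sampleMeasure_finite {N : ℕ} (p : Fin N → ℝ) : IsFiniteMeasure (sampleMeasure p) := by
  constructor
  rw [sampleMeasure_apply]
  simp only [measure_univ]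
  exact ENNReal.sum_lt_top.mpr (fun i _ => by simp [ENNReal.ofReal_lt_top])

lemma sampleMeasurePi_singleton {N s : ℕ} (p : Fin N → ℝ) (ξ : Fin s → Fin N) :
    sampleMeasurePi s p {ξ} = ∏ j, ENNReal.ofReal (p (ξ j)) := by
  rw [sampleMeasurePi, ← Set.univ_pi_singleton ξ, Measure.pi_pi]
  simp [sampleMeasure_singleton]

lemma measure_finite_set {α : Type*} [Fintype α] [MeasurableSpace α] [MeasurableSingletonClass α]
    (μ : Measure α) (E : Set α) [DecidablePred (· ∈ E)] :
    μ E = ∑ x ∈ Finset.univ.filter (· ∈ E), μ {x} := by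
  have hE : E = ⋃ x ∈ Finset.univ.filter (· ∈ E), {x} := by
    ext y; simp
  conv_lhs => rw [hE]
  rw [measure_biUnion_finset]
  · intro a _ b _ hab
    simp [Function.onFun, Set.disjoint_singleton, hab]
  · intro b _; exact measurableSet_singleton b

lemma ofReal_prod' {s : ℕ} (f : Fin s → ℝ) (hf : ∀ j, 0 ≤ f j) :
    ∏ j, ENNReal.ofReal (f j) = ENNReal.ofReal (∏ j, f j) := by
  induction s with
  | zero => simp
  | succ t ih =>
    rw [Fin.prod_univ_succ, Fin.prod_univ_succ, ih (fun j => f j.succ) (fun j => hf _),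
      ← ENNReal.ofReal_mul (hf 0)]

lemma sampleMeasurePi_apply {N s : ℕ} (p : Fin N → ℝ) (hp0 : ∀ i, 0 ≤ p i)
    (E : Set (Fin s → Fin N)) [DecidablePred (· ∈ E)] :
    sampleMeasurePi s p E
      = ENNReal.ofReal (∑ ξ ∈ Finset.univ.filter (· ∈ E), ∏ j, p (ξ j)) := by
  rw [measure_finite_set, ENNReal.ofReal_sum_of_nonneg
    (fun ξ _ => Finset.prod_nonneg fun j _ => hp0 _)]
  refine Finset.sum_congr rfl fun ξ _ => ?_
  rw [sampleMeasurePi_singleton, ofReal_prod' _ (fun j => hp0 _)]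

lemma entry_formula {N r n s : ℕ} (p : Fin N → ℝ) (hp0 : ∀ i, 0 ≤ p i)
    (U : Matrix (Fin N) (Fin r) ℝ) (Bperp : Matrix (Fin N) (Fin n) ℝ)
    (ξ : Fin s → Fin N) (k : Fin r) (l : Fin n) :
    (Uᵀ * (randSampleMatrix s p ξ)ᵀ * (randSampleMatrix s p ξ * Bperp)) k l
      = ∑ j, U (ξ j) k * Bperp (ξ j) l / ((s : ℝ) * p (ξ j)) := by
  simp only [mul_apply, transpose_apply, randSampleMatrix]
  refine Finset.sum_congr rfl fun j _ => ?_
  rw [Finset.sum_congr rfl (fun i _ => by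
        rw [show (U i k * if ξ j = i then 1 / Real.sqrt (s * p i) else 0)
          = (if ξ j = i then U i k * (1 / Real.sqrt (s * p i)) else 0) by split <;> simp]),
    Finset.sum_ite_eq,
    Finset.sum_congr rfl (fun i _ => by
        rw [show ((if ξ j = i then 1 / Real.sqrt (s * p i) else 0) * Bperp i l)
          = (if ξ j = i then (1 / Real.sqrt (s * p i)) * Bperp i l else 0) by split <;> simp]),
    Finset.sum_ite_eq]
  simp only [Finset.mem_univ, if_true]
  have hnn : (0:ℝ) ≤ (s : ℝ) * p (ξ j) := mul_nonneg (Nat.cast_nonneg s) (hp0 _)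
  rw [show U (ξ j) k * (1 / Real.sqrt ((s:ℝ) * p (ξ j))) * (1 / Real.sqrt ((s:ℝ) * p (ξ j)) * Bperp (ξ j) l)
    = U (ξ j) k * Bperp (ξ j) l * (1 / (Real.sqrt ((s:ℝ) * p (ξ j)) * Real.sqrt ((s:ℝ) * p (ξ j)))) by ring]
  rw [Real.mul_self_sqrt hnn]
  ring

lemma exp_sq {N s : ℕ} (p : Fin N → ℝ) (hp1 : ∑ i, p i = 1) (h : Fin N → ℝ)
    (hm : ∑ i, p i * h i = 0) :
    ∑ ξ : Fin s → Fin N, (∏ j, p (ξ j)) * (∑ j, h (ξ j)) ^ 2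
      = s * ∑ i, p i * h i ^ 2 := by
  have key : ∀ j j' : Fin s, ∑ ξ : Fin s → Fin N, (∏ a, p (ξ a)) * (h (ξ j) * h (ξ j'))
      = if j = j' then ∑ i, p i * h i ^ 2 else 0 := by
    intro j j'
    have claim1 : ∀ ξ : Fin s → Fin N, (∏ a, p (ξ a)) * (h (ξ j) * h (ξ j'))
        = ∏ a, (p (ξ a) * (if j = a then h (ξ a) else 1) * (if j' = a then h (ξ a) else 1)) := by
      intro ξ
      rw [Finset.prod_mul_distrib, Finset.prod_mul_distrib, Finset.prod_ite_eq,
        Finset.prod_ite_eq]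
      simp [mul_assoc]
    rw [Finset.sum_congr rfl fun ξ _ => claim1 ξ,
      ← Fintype.prod_sum (fun a i => p i * (if j = a then h i else 1) * (if j' = a then h i else 1))]
    by_cases hjj : j = j'
    · subst hjj
      rw [Finset.prod_eq_single j (fun a _ ha => by
          have hja : ¬ j = a := fun hc => ha hc.symm
          simp [hja, hp1])
        (by simp)]
      simp only [if_pos rfl, if_true]
      refine Finset.sum_congr rfl fun i _ => by ring
    · rw [if_neg hjj]
      refine Finset.prod_eq_zero (Finset.mem_univ j) ?_
      have hj'j : ¬ j' = j := fun hc => hjj hc.symm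
      simp only [if_pos rfl, hj'j, if_false, mul_one]
      exact hm
  calc ∑ ξ : Fin s → Fin N, (∏ j, p (ξ j)) * (∑ j, h (ξ j)) ^ 2
      = ∑ ξ : Fin s → Fin N, ∑ j, ∑ j', (∏ a, p (ξ a)) * (h (ξ j) * h (ξ j')) := by
        refine Finset.sum_congr rfl fun ξ _ => ?_
        rw [sq, Finset.sum_mul_sum, Finset.mul_sum]
        exact Finset.sum_congr rfl fun j _ => by rw [Finset.mul_sum]
    _ = ∑ j, ∑ j' : Fin s, ∑ ξ : Fin s → Fin N, (∏ a, p (ξ a)) * (h (ξ j) * h (ξ j')) := by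
        rw [Finset.sum_comm]
        exact Finset.sum_congr rfl fun j _ => Finset.sum_comm
    _ = ∑ j : Fin s, ∑ j' : Fin s, if j = j' then ∑ i, p i * h i ^ 2 else 0 := by
        exact Finset.sum_congr rfl fun j _ => Finset.sum_congr rfl fun j' _ => key j j'
    _ = s * ∑ i, p i * h i ^ 2 := by
        simp [Finset.sum_ite_eq]

lemma per_i_bound (s : ℕ) (hs : 0 < s) (r : ℕ) (β pi li bi : ℝ) (hβ : 0 < β)
    (hpi : 0 ≤ pi) (hli : 0 ≤ li) (hbi : 0 ≤ bi) (hβli : β * li ≤ pi * r) :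
    (s : ℝ) * (pi * (li * bi / ((s : ℝ) * pi) ^ 2)) ≤ (r : ℝ) / (β * s) * bi := by
  have hsR : (0:ℝ) < s := Nat.cast_pos.mpr hs
  rcases eq_or_lt_of_le hpi with h0 | h0
  · rw [← h0]
    simp
    positivity
  · have hLHS : (s : ℝ) * (pi * (li * bi / ((s : ℝ) * pi) ^ 2)) = li * bi / ((s:ℝ) * pi) := by
      field_simp
    rw [hLHS, div_le_iff₀ (by positivity)]
    have h1 : li * bi * β ≤ pi * r * bi := by nlinarith [mul_le_mul_of_nonneg_right hβli hbi]
    rw [div_mul_eq_mul_div, div_mul_eq_mul_div, le_div_iff₀ (by positivity)]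
    nlinarith

lemma inner_rearrange {r n : ℕ} (u : Fin r → ℝ) (b : Fin n → ℝ) (C : ℝ) :
    ∑ k, ∑ l, (u k * b l) ^ 2 / C = (∑ k, u k ^ 2) * (∑ l, b l ^ 2) / C := by
  rw [Finset.sum_mul_sum, Finset.sum_div]
  refine Finset.sum_congr rfl fun k _ => ?_
  rw [Finset.sum_div]
  exact Finset.sum_congr rfl fun l _ => by rw [mul_pow]

/-- Lemma 4.4, structural condition SC2 via leverage score sampling.
If `pᵢ ≥ β ℓᵢ(A)/r` and `s ≥ 2r/(β δ ε)`, then `‖U_Aᵀ Sᵀ S B^⊥‖_F² ≤ ε R²/2`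
holds with probability at least `1 − δ`. -/
theorem leverage_sampling_sc2 {N r n s : ℕ} (hs : 0 < s)
    (A : Matrix (Fin N) (Fin r) ℝ) (hA : A.rank = r)
    (U : Matrix (Fin N) (Fin r) ℝ) (hU : Uᵀ * U = 1)
    (hrange : LinearMap.range A.mulVecLin = LinearMap.range U.mulVecLin)
    (B : Matrix (Fin N) (Fin n) ℝ)
    (Bperp : Matrix (Fin N) (Fin n) ℝ) (hBperp : Bperp = B - U * (Uᵀ * B))
    (Rsq : ℝ) (hRsq : Rsq = frobSq Bperp)
    (p : Fin N → ℝ) (hp0 : ∀ i, 0 ≤ p i) (hp1 : ∑ i, p i = 1)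
    (β : ℝ) (hβ : β ∈ Set.Ioc (0 : ℝ) 1)
    (hlev : ∀ i, β * (∑ j, (U i j) ^ 2) / r ≤ p i)
    (ε δ : ℝ) (hε : 0 < ε) (hδ : δ ∈ Set.Ioo (0 : ℝ) 1)
    (hsamp : (s : ℝ) ≥ 2 * r / (β * δ * ε)) :
    sampleMeasurePi s p
        {ξ | frobSq (Uᵀ * (randSampleMatrix s p ξ)ᵀ * (randSampleMatrix s p ξ * Bperp))
          ≤ ε * Rsq / 2}
      ≥ ENNReal.ofReal (1 - δ) := by
  classical
  obtain ⟨hβ0, hβ1⟩ := hβ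
  obtain ⟨hδ0, hδ1⟩ := hδ
  have hfnn : ∀ {a b : Type} [Fintype a] [Fintype b] (M : Matrix a b ℝ), 0 ≤ frobSq M :=
    fun M => Finset.sum_nonneg fun _ _ => Finset.sum_nonneg fun _ _ => sq_nonneg _
  have hRnn : 0 ≤ Rsq := hRsq ▸ hfnn Bperp
  have hwnn : ∀ ξ : Fin s → Fin N, 0 ≤ ∏ j, p (ξ j) :=
    fun ξ => Finset.prod_nonneg fun j _ => hp0 _
  have hwsum : ∑ ξ : Fin s → Fin N, ∏ j, p (ξ j) = 1 := by
    rw [← Fintype.sum_pow p s, hp1, one_pow]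
  set G : Set (Fin s → Fin N) :=
    {ξ | frobSq (Uᵀ * (randSampleMatrix s p ξ)ᵀ * (randSampleMatrix s p ξ * Bperp))
      ≤ ε * Rsq / 2} with hG
  have hmemG : ∀ ξ, ξ ∈ G ↔
      frobSq (Uᵀ * (randSampleMatrix s p ξ)ᵀ * (randSampleMatrix s p ξ * Bperp))
        ≤ ε * Rsq / 2 := fun ξ => Iff.rfl
  rw [ge_iff_le, sampleMeasurePi_apply p hp0 G]
  refine ENNReal.ofReal_le_ofReal ?_
  -- reduce to a real inequality
  by_cases hR0 : Rsq = 0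
  · -- degenerate case : Bperp = 0
    have hB0 : Bperp = 0 := by
      have h0 : frobSq Bperp = 0 := by rw [← hRsq, hR0]
      ext i l
      have h1 := (Finset.sum_eq_zero_iff_of_nonneg
        (fun i (_ : i ∈ Finset.univ) => Finset.sum_nonneg fun l _ => sq_nonneg (Bperp i l))).mp
        h0 i (Finset.mem_univ i)
      have h2 := (Finset.sum_eq_zero_iff_of_nonneg
        (fun l (_ : l ∈ Finset.univ) => sq_nonneg (Bperp i l))).mp h1 l (Finset.mem_univ l)
      simpa using pow_eq_zero_iff (two_ne_zero) |>.mp h2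
    have hGuniv : ∀ ξ, ξ ∈ G := by
      intro ξ
      rw [hmemG, hB0, Matrix.mul_zero, Matrix.mul_zero, hR0]
      simp [frobSq]
    rw [Finset.filter_true_of_mem (fun ξ _ => hGuniv ξ), hwsum]
    linarith
  · have hRpos : 0 < Rsq := lt_of_le_of_ne hRnn (Ne.symm hR0)
    have htpos : 0 < ε * Rsq / 2 := by positivity
    have hsR : (0:ℝ) < s := Nat.cast_pos.mpr hs
    -- orthogonality
    have hUperp : Uᵀ * Bperp = 0 := by
      rw [hBperp, Matrix.mul_sub, ← Matrix.mul_assoc, hU, Matrix.one_mul, sub_self]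
    have hUB : ∀ (k : Fin r) (l : Fin n), ∑ i, U i k * Bperp i l = 0 := by
      intro k l
      have h := congrFun (congrFun hUperp k) l
      simpa [Matrix.mul_apply, Matrix.transpose_apply] using h
    have hUzero : ∀ i, p i = 0 → ∀ k : Fin r, U i k = 0 := by
      intro i hpi k
      have hr : (0:ℝ) < r := by exact_mod_cast k.pos
      have hl := hlev i
      rw [hpi] at hl
      have hsumnn : 0 ≤ ∑ j, U i j ^ 2 := Finset.sum_nonneg fun _ _ => sq_nonneg _
      have hsum0 : ∑ j, U i j ^ 2 = 0 := by
        by_contra hc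
        have hcc : 0 < ∑ j, U i j ^ 2 := lt_of_le_of_ne hsumnn (Ne.symm hc)
        have : 0 < β * (∑ j, U i j ^ 2) / r := by positivity
        linarith
      have := (Finset.sum_eq_zero_iff_of_nonneg
        (fun j (_ : j ∈ Finset.univ) => sq_nonneg (U i j))).mp hsum0 k (Finset.mem_univ k)
      exact pow_eq_zero_iff two_ne_zero |>.mp this
    set h : Fin r → Fin n → Fin N → ℝ :=
      fun k l i => U i k * Bperp i l / ((s:ℝ) * p i) with hh
    have hm : ∀ k l, ∑ i, p i * h k l i = 0 := by
      intro k l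
      have heach : ∀ i, p i * h k l i = U i k * Bperp i l / s := by
        intro i
        by_cases hpi : p i = 0
        · rw [hh]
          simp only []
          rw [hpi, hUzero i hpi k]
          simp
        · rw [hh]
          simp only []
          field_simp
      rw [Finset.sum_congr rfl (fun i _ => heach i), ← Finset.sum_div, hUB k l, zero_div]
    have hf_eq : ∀ ξ,
        frobSq (Uᵀ * (randSampleMatrix s p ξ)ᵀ * (randSampleMatrix s p ξ * Bperp))
          = ∑ k, ∑ l, (∑ j, h k l (ξ j)) ^ 2 := by
      intro ξ
      refine Finset.sum_congr rfl fun k _ => Finset.sum_congr rfl fun l _ => ?_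
      rw [entry_formula p hp0 U Bperp ξ k l]
    -- expectation computation
    have hEf : ∑ ξ : Fin s → Fin N, (∏ j, p (ξ j)) *
          frobSq (Uᵀ * (randSampleMatrix s p ξ)ᵀ * (randSampleMatrix s p ξ * Bperp))
        = ∑ k, ∑ l, (s:ℝ) * ∑ i, p i * h k l i ^ 2 := by
      calc ∑ ξ : Fin s → Fin N, (∏ j, p (ξ j)) *
              frobSq (Uᵀ * (randSampleMatrix s p ξ)ᵀ * (randSampleMatrix s p ξ * Bperp))
          = ∑ ξ : Fin s → Fin N, ∑ k, ∑ l, (∏ j, p (ξ j)) * (∑ j, h k l (ξ j)) ^ 2 := by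
            refine Finset.sum_congr rfl fun ξ _ => ?_
            rw [hf_eq ξ, Finset.mul_sum]
            exact Finset.sum_congr rfl fun k _ => by rw [Finset.mul_sum]
        _ = ∑ k, ∑ ξ : Fin s → Fin N, ∑ l, (∏ j, p (ξ j)) * (∑ j, h k l (ξ j)) ^ 2 :=
            Finset.sum_comm
        _ = ∑ k, ∑ l, ∑ ξ : Fin s → Fin N, (∏ j, p (ξ j)) * (∑ j, h k l (ξ j)) ^ 2 :=
            Finset.sum_congr rfl fun k _ => Finset.sum_comm
        _ = ∑ k, ∑ l, (s:ℝ) * ∑ i, p i * h k l i ^ 2 :=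
            Finset.sum_congr rfl fun k _ => Finset.sum_congr rfl fun l _ =>
              exp_sq p hp1 (h k l) (hm k l)
    -- bound on expectation
    have hbound : ∑ k, ∑ l, (s:ℝ) * ∑ i, p i * h k l i ^ 2 ≤ (r:ℝ) / (β * s) * Rsq := by
      have step1 : ∑ k, ∑ l, (s:ℝ) * ∑ i, p i * h k l i ^ 2
          = ∑ i, (s:ℝ) * (p i *
              ((∑ k, U i k ^ 2) * (∑ l, Bperp i l ^ 2) / ((s:ℝ) * p i) ^ 2)) := by
        calc ∑ k, ∑ l, (s:ℝ) * ∑ i, p i * h k l i ^ 2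
            = ∑ k, ∑ l, ∑ i, (s:ℝ) * (p i * h k l i ^ 2) := by
              refine Finset.sum_congr rfl fun k _ => Finset.sum_congr rfl fun l _ => ?_
              rw [Finset.mul_sum]
          _ = ∑ k, ∑ i, ∑ l, (s:ℝ) * (p i * h k l i ^ 2) :=
              Finset.sum_congr rfl fun k _ => Finset.sum_comm
          _ = ∑ i, ∑ k, ∑ l, (s:ℝ) * (p i * h k l i ^ 2) := Finset.sum_comm
          _ = ∑ i, (s:ℝ) * (p i *
                ((∑ k, U i k ^ 2) * (∑ l, Bperp i l ^ 2) / ((s:ℝ) * p i) ^ 2)) := by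
              refine Finset.sum_congr rfl fun i _ => ?_
              rw [← inner_rearrange (fun k => U i k) (fun l => Bperp i l) (((s:ℝ) * p i) ^ 2)]
              simp only [hh, Finset.mul_sum, div_pow]
      rw [step1, hRsq]
      rw [show frobSq Bperp = ∑ i, ∑ l, Bperp i l ^ 2 from rfl, Finset.mul_sum]
      refine Finset.sum_le_sum fun i _ => ?_
      refine per_i_bound s hs r β (p i) _ _ hβ0 (hp0 i)
        (Finset.sum_nonneg fun _ _ => sq_nonneg _)
        (Finset.sum_nonneg fun _ _ => sq_nonneg _) ?_
      rcases Nat.eq_zero_or_pos r with hr0 | hrpos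
      · subst hr0
        simp
      · have hl := hlev i
        have hrR : (0:ℝ) < r := by exact_mod_cast hrpos
        rw [div_le_iff₀ hrR] at hl
        linarith
    -- chain to δ * t
    have hfinal : ∑ ξ : Fin s → Fin N, (∏ j, p (ξ j)) *
          frobSq (Uᵀ * (randSampleMatrix s p ξ)ᵀ * (randSampleMatrix s p ξ * Bperp))
        ≤ δ * (ε * Rsq / 2) := by
      rw [hEf]
      refine hbound.trans ?_
      have h2 : (r:ℝ) / (β * s) ≤ δ * ε / 2 := by
        rw [div_le_iff₀ (by positivity)]
        rw [ge_iff_le, div_le_iff₀ (by positivity)] at hsamp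
        nlinarith
      nlinarith [mul_le_mul_of_nonneg_right h2 hRnn]
    -- Markov
    have hsplit := Finset.sum_filter_add_sum_filter_not Finset.univ (· ∈ G)
      (fun ξ => ∏ j, p (ξ j))
    rw [hwsum] at hsplit
    have hbad : ∑ ξ ∈ Finset.univ.filter (fun ξ => ¬ ξ ∈ G), ∏ j, p (ξ j) ≤ δ := by
      have hstep : (ε * Rsq / 2) * ∑ ξ ∈ Finset.univ.filter (fun ξ => ¬ ξ ∈ G), ∏ j, p (ξ j)
          ≤ δ * (ε * Rsq / 2) := by
        rw [Finset.mul_sum]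
        calc ∑ ξ ∈ Finset.univ.filter (fun ξ => ¬ ξ ∈ G), (ε * Rsq / 2) * ∏ j, p (ξ j)
            ≤ ∑ ξ ∈ Finset.univ.filter (fun ξ => ¬ ξ ∈ G), (∏ j, p (ξ j)) *
                frobSq (Uᵀ * (randSampleMatrix s p ξ)ᵀ * (randSampleMatrix s p ξ * Bperp)) := by
              refine Finset.sum_le_sum fun ξ hξ => ?_
              have hξ' : ¬ ξ ∈ G := (Finset.mem_filter.mp hξ).2
              have hlt : ε * Rsq / 2 <
                  frobSq (Uᵀ * (randSampleMatrix s p ξ)ᵀ * (randSampleMatrix s p ξ * Bperp)) :=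
                lt_of_not_ge (fun hc => hξ' ((hmemG ξ).mpr hc))
              calc (ε * Rsq / 2) * ∏ j, p (ξ j)
                  ≤ frobSq (Uᵀ * (randSampleMatrix s p ξ)ᵀ * (randSampleMatrix s p ξ * Bperp))
                      * ∏ j, p (ξ j) :=
                    mul_le_mul_of_nonneg_right hlt.le (hwnn ξ)
                _ = (∏ j, p (ξ j)) *
                    frobSq (Uᵀ * (randSampleMatrix s p ξ)ᵀ * (randSampleMatrix s p ξ * Bperp)) :=
                    mul_comm _ _
          _ ≤ ∑ ξ : Fin s → Fin N, (∏ j, p (ξ j)) *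
                frobSq (Uᵀ * (randSampleMatrix s p ξ)ᵀ * (randSampleMatrix s p ξ * Bperp)) := by
              refine Finset.sum_le_sum_of_subset_of_nonneg (Finset.filter_subset _ _)
                fun ξ _ _ => mul_nonneg (hwnn ξ) (hfnn _)
          _ ≤ δ * (ε * Rsq / 2) := hfinal
      have := (mul_le_mul_iff_right₀ htpos).mp (by linarith [hstep] : (ε * Rsq / 2) *
        (∑ ξ ∈ Finset.univ.filter (fun ξ => ¬ ξ ∈ G), ∏ j, p (ξ j)) ≤ (ε * Rsq / 2) * δ)
      exact this
    linarith
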